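/- For every n ≥ 0, the number of Motzkin paths of length n with an even number of U steps equals Σ_{k≥0} C(n, 4k)·Cat(2k), where Cat denotes Catalan numbers. -/

import Mathlib

inductive MStep where
  | U : MStep
  | D : MStep
  | H : MStep
deriving DecidableEq

/-- A word in {U,D,H} is a Motzkin path if #U = #D and no prefix has more D's than U's. -/
def IsMotzkin (w : List MStep) : Prop :=
  w.count MStep.U = w.count MStep.D ∧
  ∀ p : List MStep, p <+: w → p.count MStep.D ≤ p.count MStep.U

/-- Number of Motzkin paths of length n (the n-th Motzkin number). -/
noncomputable def motzkinNum (n : ℕ) : ℕ :=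
  Nat.card {w : List MStep // w.length = n ∧ IsMotzkin w}

/-- Number of Motzkin paths of length n with an even number of U steps. -/
noncomputable def evenMotzkin (n : ℕ) : ℕ :=
  Nat.card {w : List MStep // w.length = n ∧ IsMotzkin w ∧ Even (w.count MStep.U)}

/-- Number of Motzkin paths of length n with an odd number of U steps. -/
noncomputable def oddMotzkin (n : ℕ) : ℕ :=
  Nat.card {w : List MStep // w.length = n ∧ IsMotzkin w ∧ Odd (w.count MStep.U)}

/-- The shadow of the n-th Motzkin number: s(n) = a(n) - b(n). -/
noncomputable def shadow (n : ℕ) : ℤ :=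
  (evenMotzkin n : ℤ) - (oddMotzkin n : ℤ)


open List

namespace MAux


def nH : MStep → Bool
  | MStep.H => false
  | _ => true

lemma nH_eq (x : MStep) : nH x = true ↔ x ≠ MStep.H := by cases x <;> simp [nH]

def merge : List Bool → List MStep → List MStep
  | [], _ => []
  | false :: b, d => MStep.H :: merge b d
  | true :: b, [] => MStep.H :: merge b []
  | true :: b, x :: d => x :: merge b d

lemma counts_sum : ∀ w : List MStep,
    w.count MStep.U + w.count MStep.D + w.count MStep.H = w.length
  | [] => rfl
  | a :: w => by cases a <;> simp [count_cons, ← counts_sum w] <;> omega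

lemma count_core_U : ∀ w : List MStep, (w.filter nH).count MStep.U = w.count MStep.U
  | [] => rfl
  | a :: w => by cases a <;> simp [nH, count_cons, filter_cons, count_core_U w]

lemma count_core_D : ∀ w : List MStep, (w.filter nH).count MStep.D = w.count MStep.D
  | [] => rfl
  | a :: w => by cases a <;> simp [nH, count_cons, filter_cons, count_core_D w]

lemma count_core_H : ∀ w : List MStep, (w.filter nH).count MStep.H = 0
  | [] => rfl
  | a :: w => by cases a <;> simp [nH, count_cons, filter_cons, count_core_H w]

lemma exists_prefix_filter {α : Type*} (p : α → Bool) :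
    ∀ (w q : List α), q <+: w.filter p → ∃ u, u <+: w ∧ u.filter p = q
  | [], q, h => by
    simp only [filter_nil, prefix_nil] at h
    exact ⟨[], prefix_rfl, by simp [h]⟩
  | a :: w, q, h => by
    by_cases hp : p a
    · rw [filter_cons_of_pos hp] at h
      rcases q with _ | ⟨x, q⟩
      · exact ⟨[], nil_prefix, rfl⟩
      · rw [cons_prefix_cons] at h
        obtain ⟨rfl, h2⟩ := h
        obtain ⟨u, hu, hf⟩ := exists_prefix_filter p w q h2
        exact ⟨x :: u, cons_prefix_cons.mpr ⟨rfl, hu⟩, by simp [filter_cons, hp, hf]⟩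
    · rw [filter_cons_of_neg hp] at h
      obtain ⟨u, hu, hf⟩ := exists_prefix_filter p w q h
      exact ⟨a :: u, cons_prefix_cons.mpr ⟨rfl, hu⟩, by simp [filter_cons, hp, hf]⟩

lemma prefix_filter {α : Type*} (p : α → Bool) {u w : List α} (h : u <+: w) :
    u.filter p <+: w.filter p := by
  obtain ⟨t, rfl⟩ := h
  exact ⟨t.filter p, by simp [filter_append]⟩

lemma length_merge : ∀ (b : List Bool) (d : List MStep), (merge b d).length = b.length
  | [], _ => rfl
  | false :: b, d => by simp [merge, length_merge b d]
  | true :: b, [] => by simp [merge, length_merge b []]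
  | true :: b, x :: d => by simp [merge, length_merge b d]

lemma merge_mask_core : ∀ w : List MStep, merge (w.map nH) (w.filter nH) = w
  | [] => rfl
  | a :: w => by cases a <;> simp [nH, merge, filter_cons, merge_mask_core w]

lemma mask_merge : ∀ (b : List Bool) (d : List MStep), (∀ x ∈ d, nH x = true) →
    d.length = b.count true →
    (merge b d).map nH = b ∧ (merge b d).filter nH = d
  | [], d, _, hl => by
    have : d = [] := by simpa using hl
    subst this
    simp [merge]
  | false :: b, d, hx, hl => by
    have := mask_merge b d hx (by simpa [count_cons] using hl)
    simp [merge, nH, filter_cons, this.1, this.2]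
  | true :: b, [], hx, hl => by
    simp [count_cons] at hl
  | true :: b, x :: d, hx, hl => by
    have hxt : nH x = true := hx x mem_cons_self
    have := mask_merge b d (fun y hy => hx y (mem_cons_of_mem _ hy))
      (by simp [count_cons] at hl ⊢; omega)
    simp [merge, filter_cons, this.1, this.2, hxt]




lemma motzkin_core_iff (w : List MStep) : IsMotzkin w ↔ IsMotzkin (w.filter nH) := by
  constructor
  · rintro ⟨hc, hp⟩
    refine ⟨by rw [count_core_U, count_core_D]; exact hc, fun q hq => ?_⟩
    obtain ⟨u, hu, rfl⟩ := exists_prefix_filter nH w q hq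
    rw [count_core_U, count_core_D]
    exact hp u hu
  · rintro ⟨hc, hp⟩
    refine ⟨by rw [← count_core_U, ← count_core_D]; exact hc, fun u hu => ?_⟩
    have := hp (u.filter nH) (prefix_filter nH hu)
    rwa [count_core_U, count_core_D] at this

def toD : MStep → DyckStep
  | MStep.U => DyckStep.U
  | MStep.D => DyckStep.D
  | MStep.H => DyckStep.U

def toM : DyckStep → MStep
  | DyckStep.U => MStep.U
  | DyckStep.D => MStep.D

lemma mapToD_counts : ∀ v : List MStep, v.count MStep.H = 0 →
    (v.map toD).count DyckStep.U = v.count MStep.U ∧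
    (v.map toD).count DyckStep.D = v.count MStep.D
  | [], _ => by simp
  | a :: v, hH => by
    cases a
    · have := mapToD_counts v (by simpa [count_cons] using hH)
      simp [toD, count_cons, this.1, this.2]
    · have := mapToD_counts v (by simpa [count_cons] using hH)
      simp [toD, count_cons, this.1, this.2]
    · simp [count_cons] at hH

lemma mapToM_counts : ∀ l : List DyckStep,
    (l.map toM).count MStep.U = l.count DyckStep.U ∧
    (l.map toM).count MStep.D = l.count DyckStep.D ∧
    (l.map toM).count MStep.H = 0
  | [] => by simp
  | a :: l => by
    have := mapToM_counts l
    cases a <;> simp [toM, count_cons, this.1, this.2.1, this.2.2]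

lemma toM_toD : ∀ v : List MStep, v.count MStep.H = 0 → (v.map toD).map toM = v
  | [], _ => rfl
  | a :: v, hH => by
    cases a
    · simp [toD, toM, toM_toD v (by simpa [count_cons] using hH)]
    · simp [toD, toM, toM_toD v (by simpa [count_cons] using hH)]
    · simp [count_cons] at hH

lemma toD_toM : ∀ l : List DyckStep, (l.map toM).map toD = l
  | [] => rfl
  | a :: l => by cases a <;> simp [toD, toM, toD_toM l]

def mdEquiv (m : ℕ) :
    {v : List MStep // v.length = 2 * m ∧ IsMotzkin v ∧ v.count MStep.H = 0} ≃
    {p : DyckWord // p.semilength = m} where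
  toFun x := by
    obtain ⟨v, hlen, hm, hH⟩ := x
    have hc := mapToD_counts v hH
    refine ⟨⟨v.map toD, by rw [hc.1, hc.2]; exact hm.1, fun i => ?_⟩, ?_⟩
    · rw [← List.map_take]
      have hH' : (v.take i).count MStep.H = 0 :=
        Nat.le_zero.mp (hH ▸ ((take_sublist i v).count_le MStep.H))
      have hc' := mapToD_counts (v.take i) hH'
      rw [hc'.1, hc'.2]
      exact hm.2 _ (take_prefix i v)
    · show (v.map toD).count DyckStep.U = m
      rw [hc.1]
      have := counts_sum v
      have h1 := hm.1
      omega
  invFun x := by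
    obtain ⟨p, hp⟩ := x
    have hc := mapToM_counts p.toList
    refine ⟨p.toList.map toM, ?_, ⟨by rw [hc.1, hc.2.1]; exact p.count_U_eq_count_D, ?_⟩, hc.2.2⟩
    · rw [length_map, ← p.two_mul_semilength_eq_length, hp]
    · intro q hq
      have hqe : q = (p.toList.map toM).take q.length := by
        rw [← prefix_iff_eq_take.mp hq]
      rw [hqe, ← List.map_take]
      have hc' := mapToM_counts (p.toList.take q.length)
      rw [hc'.1, hc'.2.1]
      exact p.count_D_le_count_U q.length
  left_inv x := by
    obtain ⟨v, hlen, hm, hH⟩ := x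
    exact Subtype.ext (toM_toD v hH)
  right_inv x := by
    obtain ⟨p, hp⟩ := x
    exact Subtype.ext (DyckWord.ext (toD_toM p.toList))



lemma count_ofFn : ∀ (n : ℕ) (f : Fin n → Bool),
    (List.ofFn f).count true = (Finset.univ.filter (fun i => f i = true)).card
  | 0, f => by simp
  | n + 1, f => by
    rw [List.ofFn_succ, List.count_cons, count_ofFn n (fun i => f i.succ),
      Finset.card_filter, Finset.card_filter, Fin.sum_univ_succ]
    simp [Function.comp]
    cases h : f 0 <;> simp [h] <;> omega

lemma ofFn_get (b : List Bool) {n : ℕ} (hb : b.length = n) :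
    List.ofFn (fun i : Fin n => b.get (Fin.cast hb.symm i)) = b := by
  apply List.ext_getElem
  · simp [hb]
  · intro i h1 h2
    simp

def boolEquiv (n k : ℕ) :
    {b : List Bool // b.length = n ∧ b.count true = k} ≃
    {s : Finset (Fin n) // s.card = k} where
  toFun b := ⟨Finset.univ.filter (fun i : Fin n => b.1.get (Fin.cast b.2.1.symm i) = true), by
    rw [← count_ofFn n _, ofFn_get b.1 b.2.1]; exact b.2.2⟩
  invFun s := ⟨List.ofFn (fun i : Fin n => decide (i ∈ s.1)), by
    refine ⟨List.length_ofFn, ?_⟩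
    rw [count_ofFn]
    simpa using s.2⟩
  left_inv b := by
    apply Subtype.ext
    apply List.ext_getElem
    · simp [b.2.1]
    · intro i h1 h2
      simp [b.2.1]
  right_inv s := by
    apply Subtype.ext
    ext i
    simp

lemma card_bool (n k : ℕ) :
    Nat.card {b : List Bool // b.length = n ∧ b.count true = k} = n.choose k := by
  rw [Nat.card_congr (boolEquiv n k), Nat.card_eq_fintype_card,
    Fintype.card_finset_len, Fintype.card_fin]




instance : Fintype MStep :=
  ⟨⟨{MStep.U, MStep.D, MStep.H}, by decide⟩, by intro x; cases x <;> decide⟩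

lemma finite_sub (n : ℕ) (P : List MStep → Prop) :
    Finite {w : List MStep // w.length = n ∧ P w} := by
  haveI : Finite {l : List MStep // l.length = n} := Finite.of_fintype (List.Vector MStep n)
  exact Finite.of_injective
    (fun x : {w : List MStep // w.length = n ∧ P w} => (⟨x.1, x.2.1⟩ : List.Vector MStep n))
    (fun a b h => Subtype.ext (congrArg (fun v : List.Vector MStep n => v.toList) h))

lemma count_mask (w : List MStep) : (w.map nH).count true = (w.filter nH).length := by
  induction w with
  | nil => rfl
  | cons a w ih => cases a <;> simp [nH, count_cons, filter_cons, ih]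

lemma core_length {w : List MStep} {m : ℕ} (hm : IsMotzkin w) (hU : w.count MStep.U = m) :
    (w.filter nH).length = 2 * m := by
  have := counts_sum (w.filter nH)
  rw [count_core_U, count_core_D, count_core_H] at this
  have h1 := hm.1
  omega

def mainEquiv (n m : ℕ) :
    {w : List MStep // w.length = n ∧ IsMotzkin w ∧ w.count MStep.U = m} ≃
    {b : List Bool // b.length = n ∧ b.count true = 2 * m} ×
      {v : List MStep // v.length = 2 * m ∧ IsMotzkin v ∧ v.count MStep.H = 0} where
  toFun x :=
    ⟨⟨x.1.map nH, by rw [length_map]; exact x.2.1, by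
        rw [count_mask]; exact core_length x.2.2.1 x.2.2.2⟩,
     ⟨x.1.filter nH, core_length x.2.2.1 x.2.2.2,
        (motzkin_core_iff x.1).mp x.2.2.1, count_core_H x.1⟩⟩
  invFun x := by
    obtain ⟨⟨b, hbl, hbc⟩, ⟨v, hvl, hvm, hvH⟩⟩ := x
    have hall : ∀ y ∈ v, nH y = true := by
      intro y hy
      have : y ≠ MStep.H := by
        rintro rfl
        exact (List.count_eq_zero.mp hvH) hy
      cases y <;> simp [nH] at this ⊢
    have hmm := mask_merge b v hall (by omega)
    refine ⟨merge b v, by rw [length_merge]; exact hbl, ?_, ?_⟩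
    · rw [motzkin_core_iff, hmm.2]; exact hvm
    · rw [← count_core_U, hmm.2]
      have := counts_sum v
      have := hvm.1
      omega
  left_inv x := Subtype.ext (merge_mask_core x.1)
  right_inv x := by
    obtain ⟨⟨b, hbl, hbc⟩, ⟨v, hvl, hvm, hvH⟩⟩ := x
    have hall : ∀ y ∈ v, nH y = true := by
      intro y hy
      have : y ≠ MStep.H := by
        rintro rfl
        exact (List.count_eq_zero.mp hvH) hy
      cases y <;> simp [nH] at this ⊢
    have hmm := mask_merge b v hall (by omega)
    exact Prod.ext (Subtype.ext hmm.1) (Subtype.ext hmm.2)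

lemma key (n m : ℕ) :
    Nat.card {w : List MStep // w.length = n ∧ IsMotzkin w ∧ w.count MStep.U = m} =
      n.choose (2 * m) * catalan m := by
  rw [Nat.card_congr (mainEquiv n m), Nat.card_prod, card_bool,
    Nat.card_congr (mdEquiv m), Nat.card_eq_fintype_card,
    DyckWord.card_dyckWord_semilength_eq_catalan]

end MAux

theorem stmt_4 : ∀ n : ℕ,
    evenMotzkin n = ∑ k ∈ Finset.range (n + 1), Nat.choose n (4 * k) * catalan (2 * k) := by
  intro n
  classical
  set E := {w : List MStep // w.length = n ∧ IsMotzkin w ∧ Even (w.count MStep.U)} with hE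
  let f : E → Fin (n + 1) := fun w =>
    ⟨w.1.count MStep.U / 2, by
      have h1 : w.1.count MStep.U ≤ w.1.length := List.count_le_length
      have h2 := w.2.1
      omega⟩
  have eqv2 : ∀ k : Fin (n + 1), {w : E // f w = k} ≃
      {w : List MStep // w.length = n ∧ IsMotzkin w ∧ w.count MStep.U = 2 * k.val} := by
    intro k
    refine ⟨fun x => ⟨x.1.1, x.1.2.1, x.1.2.2.1, ?_⟩,
      fun y => ⟨⟨y.1, y.2.1, y.2.2.1, ⟨k.val, by rw [y.2.2.2]; ring⟩⟩, ?_⟩, ?_, ?_⟩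
    · have h1 : x.1.1.count MStep.U / 2 = k.val := congrArg Fin.val x.2
      obtain ⟨r, hr⟩ := x.1.2.2.2
      omega
    · apply Fin.ext
      show y.1.count MStep.U / 2 = k.val
      rw [y.2.2.2]
      omega
    · intro x; exact Subtype.ext (Subtype.ext rfl)
    · intro y; exact Subtype.ext rfl
  letI : ∀ k : Fin (n + 1),
      Fintype {w : List MStep // w.length = n ∧ IsMotzkin w ∧ w.count MStep.U = 2 * k.val} :=
    fun k => @Fintype.ofFinite _ (MAux.finite_sub n _)
  have h1 : evenMotzkin n = Nat.card
      (Σ k : Fin (n + 1), {w : List MStep //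
        w.length = n ∧ IsMotzkin w ∧ w.count MStep.U = 2 * k.val}) := by
    rw [evenMotzkin, ← hE]
    exact Nat.card_congr ((Equiv.sigmaFiberEquiv f).symm.trans (Equiv.sigmaCongrRight eqv2))
  rw [h1, Nat.card_eq_fintype_card, Fintype.card_sigma]
  rw [← Fin.sum_univ_eq_sum_range (fun k => Nat.choose n (4 * k) * catalan (2 * k))]
  congr 1
  funext k
  rw [← Nat.card_eq_fintype_card, MAux.key n (2 * k.val)]
  congr 2
  omega
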